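/- With c* = 1/5 and u_{c*}(ξ) = c*·sech²(√c*·ξ), the functions w₀(ξ) = -15·sech²(√c*·ξ) + (15/2)·sech⁴(√c*·ξ) and ∂_c u_{c*}(ξ) = sech²(√c*·ξ) - √c*·ξ·tanh(√c*·ξ)·sech²(√c*·ξ) satisfy ⟨u_{c*}, w₀⟩_{L²} + 12⟨u_{c*}, ∂_c u_{c*}⟩_{L²} = 0. -/

import Mathlib

open Real MeasureTheory Filter Topology

lemma sinh_abs_le_cosh (y : ℝ) : |Real.sinh y| ≤ Real.cosh y := by
  have h1 := Real.cosh_sq y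
  have h2 := Real.cosh_pos y
  rw [abs_le]; constructor <;> nlinarith

lemma abs_le_cosh (y : ℝ) : |y| ≤ Real.cosh y := by
  have h1 : |y| ≤ |Real.sinh y| := by
    rw [Real.abs_sinh]; exact Real.self_le_sinh_iff.mpr (abs_nonneg y)
  exact h1.trans (sinh_abs_le_cosh y)

lemma sq_add_one_le_cosh_sq (y : ℝ) : y^2 + 1 ≤ Real.cosh y ^ 2 := by
  have h1 : |y| ≤ |Real.sinh y| := by
    rw [Real.abs_sinh]; exact Real.self_le_sinh_iff.mpr (abs_nonneg y)
  have h2 : y^2 ≤ Real.sinh y ^ 2 := by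
    rw [← sq_abs y, ← sq_abs (Real.sinh y)]
    exact pow_le_pow_left₀ (abs_nonneg y) h1 2
  nlinarith [Real.cosh_sq y]

lemma tendsto_cosh_mul_atTop {a : ℝ} (ha : 0 < a) :
    Tendsto (fun x : ℝ => Real.cosh (a * x)) atTop atTop := by
  apply tendsto_atTop_mono (f := fun x : ℝ => Real.exp (a * x) / 2)
  · intro x; rw [Real.cosh_eq]; have := Real.exp_pos (-(a*x)); linarith
  · exact (Real.tendsto_exp_atTop.comp (Tendsto.const_mul_atTop ha tendsto_id)).atTop_div_const
      (by norm_num)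

lemma tendsto_cosh_mul_atBot {a : ℝ} (ha : 0 < a) :
    Tendsto (fun x : ℝ => Real.cosh (a * x)) atBot atTop := by
  apply tendsto_atTop_mono (f := fun x : ℝ => Real.exp (-(a * x)) / 2)
  · intro x; rw [Real.cosh_eq]; have := Real.exp_pos (a*x); linarith
  · refine (Real.tendsto_exp_atTop.comp ?_).atTop_div_const (by norm_num)
    exact tendsto_neg_atBot_atTop.comp (Tendsto.const_mul_atBot ha tendsto_id)

lemma hasDerivAt_F {a : ℝ} (ha : 0 < a) (x : ℝ) :
    HasDerivAt (fun x : ℝ => (3/5) * x / (Real.cosh (a*x))^4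
        + (3/(10*a)) * Real.sinh (a*x) / (Real.cosh (a*x))^5)
      ((1/5) * (1/Real.cosh (a*x))^2 * (-15*(1/Real.cosh (a*x))^2 + (15/2)*(1/Real.cosh (a*x))^4)
       + 12 * ((1/5) * (1/Real.cosh (a*x))^2 *
          ((1/Real.cosh (a*x))^2 - a*x*Real.tanh (a*x)*(1/Real.cosh (a*x))^2))) x := by
  have hC : Real.cosh (a*x) ≠ 0 := (Real.cosh_pos _).ne'
  have hax : HasDerivAt (fun x : ℝ => a * x) a x := by
    simpa using (hasDerivAt_id x).const_mul a
  have hcosh : HasDerivAt (fun x : ℝ => Real.cosh (a*x)) (Real.sinh (a*x) * a) x := hax.cosh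
  have hsinh : HasDerivAt (fun x : ℝ => Real.sinh (a*x)) (Real.cosh (a*x) * a) x := hax.sinh
  have hC4 : HasDerivAt (fun x : ℝ => (Real.cosh (a*x))^4)
      (4 * (Real.cosh (a*x))^3 * (Real.sinh (a*x) * a)) x := by
    simpa using hcosh.fun_pow 4
  have hC5 : HasDerivAt (fun x : ℝ => (Real.cosh (a*x))^5)
      (5 * (Real.cosh (a*x))^4 * (Real.sinh (a*x) * a)) x := by
    simpa using hcosh.fun_pow 5
  have hnum1 : HasDerivAt (fun x : ℝ => (3/5) * x) (3/5) x := by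
    simpa using (hasDerivAt_id x).const_mul (3/5 : ℝ)
  have hnum2 : HasDerivAt (fun x : ℝ => (3/(10*a)) * Real.sinh (a*x))
      ((3/(10*a)) * (Real.cosh (a*x) * a)) x := hsinh.const_mul _
  have h1 := hnum1.fun_div hC4 (pow_ne_zero 4 hC)
  have h2 := hnum2.fun_div hC5 (pow_ne_zero 5 hC)
  have := h1.fun_add h2
  refine this.congr_deriv (Eq.symm ?_)
  rw [Real.tanh_eq_sinh_div_cosh]
  have hsq := Real.cosh_sq (a*x)
  field_simp
  linear_combination (-150) * hsq

lemma sech_sq_bound {a : ℝ} (ha : 0 < a) (x : ℝ) :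
    (1/Real.cosh (a*x))^2 ≤ (1 + 1/a^2) * (1 + x^2)⁻¹ := by
  have hC0 : (0:ℝ) < Real.cosh (a*x) := Real.cosh_pos _
  have hkey : (a*x)^2 + 1 ≤ Real.cosh (a*x)^2 := sq_add_one_le_cosh_sq (a*x)
  have hx2 : (0:ℝ) < 1 + x^2 := by positivity
  have hM : (0:ℝ) ≤ 1 + 1/a^2 := by positivity
  have e : (1/a^2) * (a*x)^2 = x^2 := by field_simp
  have h1 : (1+x^2) ≤ (1 + 1/a^2) * Real.cosh (a*x)^2 := by
    have h2 := mul_le_mul_of_nonneg_left hkey hM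
    have h3 : (0:ℝ) ≤ 1/a^2 := by positivity
    nlinarith [sq_nonneg (a*x)]
  rw [div_pow, one_pow, ← div_eq_mul_inv, div_le_div_iff₀ (by positivity) hx2]
  linarith

lemma continuous_sech_mul {a : ℝ} : Continuous fun x : ℝ => 1 / Real.cosh (a*x) :=
  continuous_const.div (Real.continuous_cosh.comp (continuous_const.mul continuous_id))
    (fun x => (Real.cosh_pos _).ne')

lemma integrable_part1 {a : ℝ} (ha : 0 < a) :
    Integrable (fun x : ℝ => (1/5) * (1/Real.cosh (a*x))^2 *
      (-15*(1/Real.cosh (a*x))^2 + (15/2)*(1/Real.cosh (a*x))^4)) := by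
  have hcont : Continuous fun x : ℝ => (1/5) * (1/Real.cosh (a*x))^2 *
      (-15*(1/Real.cosh (a*x))^2 + (15/2)*(1/Real.cosh (a*x))^4) := by
    have h := continuous_sech_mul (a := a)
    fun_prop
  refine (integrable_inv_one_add_sq.const_mul ((9/2) * (1 + 1/a^2))).mono'
    hcont.aestronglyMeasurable (Filter.Eventually.of_forall fun x => ?_)
  have hC0 : (0:ℝ) < Real.cosh (a*x) := Real.cosh_pos _
  have hs0 : (0:ℝ) ≤ 1/Real.cosh (a*x) := by positivity
  have hs1 : 1/Real.cosh (a*x) ≤ 1 := by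
    rw [div_le_one hC0]; exact Real.one_le_cosh _
  set s := 1/Real.cosh (a*x) with hs
  have hkey : s^2 ≤ (1 + 1/a^2) * (1 + x^2)⁻¹ := sech_sq_bound ha x
  have h2 : s^2 ≤ 1 := by nlinarith
  have h4 : s^4 ≤ s^2 := by nlinarith [mul_le_mul_of_nonneg_left h2 (sq_nonneg s)]
  have h6 : s^6 ≤ s^2 := by nlinarith [mul_le_mul_of_nonneg_left h4 (sq_nonneg s)]
  rw [Real.norm_eq_abs, abs_le]
  constructor <;>
    nlinarith [pow_nonneg hs0 6, pow_nonneg hs0 4, hkey, h4, h6,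
      mul_nonneg (mul_nonneg hs0 hs0) (mul_nonneg hs0 hs0)]

lemma integrable_part2 {a : ℝ} (ha : 0 < a) :
    Integrable (fun x : ℝ => (1/5) * (1/Real.cosh (a*x))^2 *
      ((1/Real.cosh (a*x))^2 - a*x*Real.tanh (a*x)*(1/Real.cosh (a*x))^2)) := by
  have hcont : Continuous fun x : ℝ => (1/5) * (1/Real.cosh (a*x))^2 *
      ((1/Real.cosh (a*x))^2 - a*x*Real.tanh (a*x)*(1/Real.cosh (a*x))^2) := by
    have h := continuous_sech_mul (a := a)
    have heq : (fun x : ℝ => Real.tanh (a*x))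
        = fun x : ℝ => Real.sinh (a*x) / Real.cosh (a*x) :=
      funext fun x => Real.tanh_eq_sinh_div_cosh _
    have htanh : Continuous fun x : ℝ => Real.tanh (a*x) := by
      rw [heq]
      exact (Real.continuous_sinh.comp (continuous_const.mul continuous_id)).div
        (Real.continuous_cosh.comp (continuous_const.mul continuous_id))
        (fun x => (Real.cosh_pos _).ne')
    fun_prop
  refine (integrable_inv_one_add_sq.const_mul ((2/5) * (1 + 1/a^2))).mono'
    hcont.aestronglyMeasurable (Filter.Eventually.of_forall fun x => ?_)
  have hC0 : (0:ℝ) < Real.cosh (a*x) := Real.cosh_pos _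
  have hs0 : (0:ℝ) ≤ 1/Real.cosh (a*x) := by positivity
  have hs1 : 1/Real.cosh (a*x) ≤ 1 := by
    rw [div_le_one hC0]; exact Real.one_le_cosh _
  have hT : |a*x*Real.tanh (a*x)| ≤ Real.cosh (a*x)^2 := by
    rw [Real.tanh_eq_sinh_div_cosh, abs_mul, abs_div]
    have h1 : |a*x| ≤ Real.cosh (a*x) := abs_le_cosh _
    have h2 : |Real.sinh (a*x)| / |Real.cosh (a*x)| ≤ 1 := by
      rw [abs_of_pos hC0, div_le_one hC0]; exact sinh_abs_le_cosh _
    calc |a*x| * (|Real.sinh (a*x)| / |Real.cosh (a*x)|)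
        ≤ Real.cosh (a*x) * 1 := by
          apply mul_le_mul h1 h2 (by positivity) hC0.le
      _ ≤ Real.cosh (a*x)^2 := by nlinarith [Real.one_le_cosh (a*x)]
  obtain ⟨hT1, hT2⟩ := abs_le.mp hT
  set s := 1/Real.cosh (a*x) with hs
  have hs4C : s^4 * Real.cosh (a*x)^2 = s^2 := by
    rw [hs]; field_simp
  have hTs : a*x*Real.tanh (a*x) * s^4 ≤ s^2 := by
    calc a*x*Real.tanh (a*x) * s^4 ≤ Real.cosh (a*x)^2 * s^4 := by
          apply mul_le_mul_of_nonneg_right hT2 (by positivity)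
      _ = s^2 := by rw [mul_comm]; exact hs4C
  have hTs2 : -(s^2) ≤ a*x*Real.tanh (a*x) * s^4 := by
    calc -(s^2) = -(Real.cosh (a*x)^2) * s^4 := by rw [neg_mul, mul_comm]; rw [hs4C]
      _ ≤ a*x*Real.tanh (a*x) * s^4 := by
          apply mul_le_mul_of_nonneg_right hT1 (by positivity)
  have hkey : s^2 ≤ (1 + 1/a^2) * (1 + x^2)⁻¹ := sech_sq_bound ha x
  have h2 : s^2 ≤ 1 := by nlinarith
  have h4 : s^4 ≤ s^2 := by nlinarith [mul_le_mul_of_nonneg_left h2 (sq_nonneg s)]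
  rw [Real.norm_eq_abs, abs_le]
  constructor <;> nlinarith [pow_nonneg hs0 4, hkey, h4, hTs, hTs2]

lemma F_norm_bound {a : ℝ} (ha : 0 < a) (x : ℝ) :
    ‖(3/5) * x / (Real.cosh (a*x))^4 + (3/(10*a)) * Real.sinh (a*x) / (Real.cosh (a*x))^5‖
      ≤ (9/(10*a)) * (1/Real.cosh (a*x)) := by
  have hC0 : (0:ℝ) < Real.cosh (a*x) := Real.cosh_pos _
  have hC1 : (1:ℝ) ≤ Real.cosh (a*x) := Real.one_le_cosh _
  have hx : a * |x| ≤ Real.cosh (a*x) := by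
    have h := abs_le_cosh (a*x); rwa [abs_mul, abs_of_pos ha] at h
  have hS : |Real.sinh (a*x)| ≤ Real.cosh (a*x) := sinh_abs_le_cosh _
  have h1 : |(3/5) * x / (Real.cosh (a*x))^4| ≤ (3/(5*a)) * (1/Real.cosh (a*x)) := by
    rw [abs_div, abs_mul, abs_of_pos (pow_pos hC0 4),
      abs_of_pos (show (0:ℝ) < 3/5 by norm_num), div_le_iff₀ (pow_pos hC0 4)]
    have hrw : (3/(5*a)) * (1/Real.cosh (a*x)) * Real.cosh (a*x)^4
        = (3/(5*a)) * Real.cosh (a*x)^3 := by field_simp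
    rw [hrw]
    have hC2 : (1:ℝ) ≤ Real.cosh (a*x)^2 := by nlinarith
    have h4 : a * |x| ≤ Real.cosh (a*x)^3 :=
      hx.trans (by nlinarith [mul_le_mul_of_nonneg_left hC2 hC0.le])
    calc (3/5) * |x| = (3/(5*a)) * (a*|x|) := by field_simp
      _ ≤ (3/(5*a)) * Real.cosh (a*x)^3 :=
          mul_le_mul_of_nonneg_left h4 (by positivity)
  have h2 : |(3/(10*a)) * Real.sinh (a*x) / (Real.cosh (a*x))^5|
      ≤ (3/(10*a)) * (1/Real.cosh (a*x)) := by
    rw [abs_div, abs_mul, abs_of_pos (pow_pos hC0 5),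
      abs_of_pos (show (0:ℝ) < 3/(10*a) by positivity), div_le_iff₀ (pow_pos hC0 5)]
    have hrw : (3/(10*a)) * (1/Real.cosh (a*x)) * Real.cosh (a*x)^5
        = (3/(10*a)) * Real.cosh (a*x)^4 := by field_simp
    rw [hrw]
    have hC2 : (1:ℝ) ≤ Real.cosh (a*x)^2 := by nlinarith
    have hC3 : Real.cosh (a*x) ≤ Real.cosh (a*x)^3 := by
      nlinarith [mul_le_mul_of_nonneg_left hC2 hC0.le]
    have hC3' : (1:ℝ) ≤ Real.cosh (a*x)^3 := hC1.trans hC3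
    have h4 : |Real.sinh (a*x)| ≤ Real.cosh (a*x)^4 :=
      hS.trans (by nlinarith [mul_le_mul_of_nonneg_left hC3' hC0.le])
    exact mul_le_mul_of_nonneg_left h4 (by positivity)
  calc ‖(3/5) * x / (Real.cosh (a*x))^4 + (3/(10*a)) * Real.sinh (a*x) / (Real.cosh (a*x))^5‖
      ≤ |(3/5) * x / (Real.cosh (a*x))^4| + |(3/(10*a)) * Real.sinh (a*x) / (Real.cosh (a*x))^5| :=
        abs_add_le _ _
    _ ≤ (3/(5*a)) * (1/Real.cosh (a*x)) + (3/(10*a)) * (1/Real.cosh (a*x)) := add_le_add h1 h2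
    _ = (9/(10*a)) * (1/Real.cosh (a*x)) := by field_simp; ring

lemma aux_cancel {a : ℝ} (ha : 0 < a) :
    (∫ x : ℝ, (1/5 : ℝ) * (1/Real.cosh (a*x))^2 *
        (-15*(1/Real.cosh (a*x))^2 + (15/2)*(1/Real.cosh (a*x))^4))
    + 12 * (∫ x : ℝ, (1/5 : ℝ) * (1/Real.cosh (a*x))^2 *
        ((1/Real.cosh (a*x))^2 - a*x*Real.tanh (a*x)*(1/Real.cosh (a*x))^2)) = 0 := by
  have hint1 := integrable_part1 ha
  have hint2 := integrable_part2 ha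
  rw [← MeasureTheory.integral_const_mul,
    ← MeasureTheory.integral_add hint1 (hint2.const_mul 12)]
  have htop : Tendsto (fun x : ℝ => (3/5) * x / (Real.cosh (a*x))^4
      + (3/(10*a)) * Real.sinh (a*x) / (Real.cosh (a*x))^5) atTop (𝓝 0) := by
    apply squeeze_zero_norm (F_norm_bound ha)
    have h := (tendsto_cosh_mul_atTop ha).inv_tendsto_atTop
    simpa [one_div] using h.const_mul (9/(10*a))
  have hbot : Tendsto (fun x : ℝ => (3/5) * x / (Real.cosh (a*x))^4
      + (3/(10*a)) * Real.sinh (a*x) / (Real.cosh (a*x))^5) atBot (𝓝 0) := by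
    apply squeeze_zero_norm (F_norm_bound ha)
    have h := (tendsto_cosh_mul_atBot ha).inv_tendsto_atTop
    simpa [one_div] using h.const_mul (9/(10*a))
  have h0 := MeasureTheory.integral_of_hasDerivAt_of_tendsto (hasDerivAt_F ha)
    (hint1.add (hint2.const_mul 12)) hbot htop
  simpa using h0

/-- With `c* = 1/5`, the cancellation identity
`⟨u_{c*}, w₀⟩ + 12⟨u_{c*}, ∂_c u_{c*}⟩ = 0` holds. -/
theorem momentum_cancellation :
    let c : ℝ := 1/5
    let u : ℝ → ℝ := fun ξ => c * (1 / Real.cosh (Real.sqrt c * ξ))^2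
    let w₀ : ℝ → ℝ := fun ξ => -15 * (1 / Real.cosh (Real.sqrt c * ξ))^2
        + (15/2) * (1 / Real.cosh (Real.sqrt c * ξ))^4
    let dcu : ℝ → ℝ := fun ξ => (1 / Real.cosh (Real.sqrt c * ξ))^2
        - Real.sqrt c * ξ * Real.tanh (Real.sqrt c * ξ) * (1 / Real.cosh (Real.sqrt c * ξ))^2
    (∫ ξ : ℝ, u ξ * w₀ ξ) + 12 * (∫ ξ : ℝ, u ξ * dcu ξ) = 0 := by
  intro c u w₀ dcu
  have ha : 0 < Real.sqrt c := Real.sqrt_pos.mpr (by norm_num [c])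
  exact aux_cancel ha
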